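/- arXiv:1811.08683 — 2 statements merged into one kernel-verified Lean document; each statement's English description precedes it below -/
import Mathlib

section
/- For a solution ψ of the dipole equation B ψ = q with q_r = Q > 0, q_s = -Q, q_n = 0 otherwise, the potential drop across any edge is bounded by the drop from r to s: |ψ_m - ψ_n| ≤ ψ_r - ψ_s for every edge (m,n). -/
open Matrix BigOperators

/-- The weighted Laplacian of a weight function `w` on `Fin N`. -/
def lapMat {N : ℕ} (w : Fin N → Fin N → ℝ) : Matrix (Fin N) (Fin N) ℝ :=
  fun i j => if i = j then ∑ k, w i k else - w i j

/-- Symmetric, nonnegative weights with zero diagonal. -/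
def IsWeight {N : ℕ} (w : Fin N → Fin N → ℝ) : Prop :=
  (∀ i j, w i j = w j i) ∧ (∀ i j, 0 ≤ w i j) ∧ (∀ i, w i i = 0)

/-- The simple graph whose edges are the pairs with nonzero weight. -/
def wGraph {N : ℕ} (w : Fin N → Fin N → ℝ) : SimpleGraph (Fin N) where
  Adj i j := i ≠ j ∧ (w i j ≠ 0 ∨ w j i ≠ 0)
  symm := ⟨fun i j ⟨h1, h2⟩ => ⟨h1.symm, h2.symm⟩⟩
  loopless := ⟨fun i h => h.1 rfl⟩

/-- The dipole vector `ν_rs`: `+1` at `r`, `-1` at `s`, `0` elsewhere. -/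
def dipole {N : ℕ} (r s : Fin N) : Fin N → ℝ :=
  fun i => (if i = r then (1:ℝ) else 0) - (if i = s then (1:ℝ) else 0)

/-- `Bd` is the Moore-Penrose pseudoinverse of `B` (the four Penrose axioms). -/
def IsMoorePenrose {N : ℕ} (B Bd : Matrix (Fin N) (Fin N) ℝ) : Prop :=
  B * Bd * B = B ∧ Bd * B * Bd = Bd ∧ (B * Bd)ᵀ = B * Bd ∧ (Bd * B)ᵀ = Bd * B

/-- The locality factor `η(r,s) = b_rs ν_rs^T B^† ν_rs`. -/
def eta {N : ℕ} (w : Fin N → Fin N → ℝ) (Bdag : Matrix (Fin N) (Fin N) ℝ)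
    (r s : Fin N) : ℝ :=
  w r s * (dipole r s ⬝ᵥ Bdag.mulVec (dipole r s))

lemma lap_apply {N : ℕ} (w : Fin N → Fin N → ℝ) (hw : IsWeight w) (ψ : Fin N → ℝ) (i : Fin N) :
    (lapMat w).mulVec ψ i = ∑ k, w i k * (ψ i - ψ k) := by
  simp only [lapMat, mulVec, dotProduct, mul_sub, Finset.sum_sub_distrib, ite_mul, neg_mul,
    Finset.sum_ite_eq, Finset.mem_univ, if_true, ← Finset.sum_mul]
  have h1 : ∀ k, (if i = k then (∑ k', w i k') * ψ k else -(w i k * ψ k))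
      = (if i = k then ((∑ k', w i k') + w i k) * ψ k else 0) - w i k * ψ k := by
    intro k
    by_cases h : i = k
    · subst h; simp [hw.2.2 i]
    · simp [h]
  rw [Finset.sum_congr rfl (fun k _ => h1 k), Finset.sum_sub_distrib, Finset.sum_ite_eq,
    if_pos (Finset.mem_univ i), hw.2.2 i, add_zero]

lemma max_at_source {N : ℕ} (w : Fin N → Fin N → ℝ) (hw : IsWeight w)
    (hconn : (wGraph w).Connected) (r : Fin N) (ψ q : Fin N → ℝ)
    (hq : (lapMat w).mulVec ψ = q) (hneg : ∀ i, i ≠ r → q i ≤ 0) :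
    ∀ i, ψ i ≤ ψ r := by
  have : Nonempty (Fin N) := hconn.nonempty
  obtain ⟨m0, hm0⟩ := Finite.exists_max ψ
  suffices h : ψ m0 ≤ ψ r by intro i; exact le_trans (hm0 i) h
  -- closedness: if ψ i = ψ m0 and i ≠ r, neighbors also attain max
  have closed : ∀ i, ψ i = ψ m0 → i ≠ r → ∀ j, (wGraph w).Adj i j → ψ j = ψ m0 := by
    intro i hi hir j hij
    have hsum : ∑ k, w i k * (ψ i - ψ k) = q i := by rw [← lap_apply w hw ψ i, hq]
    have hnn : ∀ k ∈ Finset.univ, 0 ≤ w i k * (ψ i - ψ k) := by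
      intro k _
      exact mul_nonneg (hw.2.1 i k) (by rw [hi]; linarith [hm0 k])
    have hz : ∑ k, w i k * (ψ i - ψ k) = 0 :=
      le_antisymm (hsum ▸ hneg i hir) (Finset.sum_nonneg hnn)
    have hterm := (Finset.sum_eq_zero_iff_of_nonneg hnn).mp hz j (Finset.mem_univ j)
    have hwij : w i j ≠ 0 := by
      rcases hij.2 with h | h
      · exact h
      · rw [hw.1 i j]; exact h
    have : ψ i - ψ j = 0 := by
      rcases mul_eq_zero.mp hterm with h | h
      · exact absurd h hwij
      · exact h
    linarith [hi]
  -- walk induction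
  have key : ∀ (i j : Fin N) (p : (wGraph w).Walk i j),
      ψ i = ψ m0 → (ψ j = ψ m0 ∨ ψ r = ψ m0) := by
    intro i j p
    induction p with
    | nil => exact fun hi => Or.inl hi
    | cons h p ih =>
      rename_i a b c
      intro hi
      by_cases har : a = r
      · exact Or.inr (har ▸ hi)
      · exact ih (closed a hi har b h)
  obtain ⟨p⟩ := hconn.preconnected m0 r
  rcases key m0 r p rfl with h | h <;> exact le_of_eq h.symm


theorem potential_drop_bounded_by_dipole_drop {N : ℕ} (w : Fin N → Fin N → ℝ)
    (hw : IsWeight w) (hconn : (wGraph w).Connected)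
    (r s : Fin N) (Q : ℝ) (hQ : 0 < Q) (q ψ : Fin N → ℝ)
    (hq : (lapMat w).mulVec ψ = q)
    (hqr : q r = Q) (hqs : q s = - Q) (hq0 : ∀ n, n ≠ r → n ≠ s → q n = 0) :
    ∀ m n, (wGraph w).Adj m n → |ψ m - ψ n| ≤ ψ r - ψ s := by
  have hrs : r ≠ s := by
    intro h; rw [h, hqs] at hqr; linarith
  have hmax : ∀ i, ψ i ≤ ψ r := by
    apply max_at_source w hw hconn r ψ q hq
    intro i hir
    by_cases his : i = s
    · subst his; rw [hqs]; linarith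
    · rw [hq0 i hir his]
  have hmin : ∀ i, ψ s ≤ ψ i := by
    have hq' : (lapMat w).mulVec (-ψ) = -q := by rw [Matrix.mulVec_neg, hq]
    have h := max_at_source w hw hconn s (-ψ) (-q) hq' ?_
    · intro i; have := h i; simpa using this
    · intro i his
      by_cases hir : i = r
      · subst hir; simp [hqr]; linarith
      · simp [hq0 i hir his]
  intro m n _
  rw [abs_sub_le_iff]
  constructor <;> [skip; skip] <;> linarith [hmax m, hmax n, hmin m, hmin n]
end

section
/- If there are fewer than two edge-independent paths between the vertex sets {r,s} and {m,n} in a connected graph, then the line outage distribution factor between edges (m,n) and (r,s) vanishes: the failure of edge (r,s) induces no flow change on edge (m,n). Equivalently, in the solution ψ of the dipole equation B ψ = q with source ν_rs, we have ψ_m = ψ_n. -/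
open Matrix BigOperators

-- auxiliary subgraph: edges both of whose endpoints have potential ≥ c
def subG {N : ℕ} (w : Fin N → Fin N → ℝ) (ψ : Fin N → ℝ) (c : ℝ) :
    SimpleGraph (Fin N) where
  Adj i j := (wGraph w).Adj i j ∧ c ≤ ψ i ∧ c ≤ ψ j
  symm := ⟨fun i j ⟨h, hi, hj⟩ => ⟨h.symm, hj, hi⟩⟩
  loopless := ⟨fun i h => h.1.1 rfl⟩

lemma subG_support_ge {N : ℕ} {w : Fin N → Fin N → ℝ} {ψ : Fin N → ℝ} {c : ℝ}
    {u v : Fin N} (p : (subG w ψ c).Walk u v) (hu : c ≤ ψ u) :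
    ∀ x ∈ p.support, c ≤ ψ x := by
  induction p with
  | nil => intro x hx; simp at hx; subst hx; exact hu
  | cons h q ih =>
    intro x hx
    rw [SimpleGraph.Walk.support_cons] at hx
    rcases List.mem_cons.mp hx with h1 | h2
    · subst h1; exact hu
    · exact ih (show (wGraph w).Adj _ _ ∧ c ≤ ψ _ ∧ c ≤ ψ _ from h).2.2 x h2

lemma lap_mulVec {N : ℕ} (w : Fin N → Fin N → ℝ) (hdiag : ∀ i, w i i = 0)
    (ψ : Fin N → ℝ) (i : Fin N) :
    (lapMat w).mulVec ψ i = ∑ j, w i j * (ψ i - ψ j) := by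
  have : ∀ j, lapMat w i j = (if i = j then ∑ k, w i k else 0) - w i j := by
    intro j
    by_cases h : i = j
    · subst h; simp [lapMat, hdiag i]
    · simp [lapMat, h]
  simp only [Matrix.mulVec, dotProduct]
  calc ∑ j, lapMat w i j * ψ j
      = ∑ j, (((if i = j then ∑ k, w i k else 0) * ψ j) - w i j * ψ j) := by
        apply Finset.sum_congr rfl; intro j _; rw [this j]; ring
    _ = (∑ k, w i k) * ψ i - ∑ j, w i j * ψ j := by
        rw [Finset.sum_sub_distrib]
        congr 1
        simp only [ite_mul, zero_mul]
        rw [Finset.sum_ite_eq Finset.univ i (fun j => (∑ k, w i k) * ψ j)]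
        simp
    _ = ∑ j, w i j * (ψ i - ψ j) := by
        rw [Finset.sum_mul, ← Finset.sum_sub_distrib]
        apply Finset.sum_congr rfl; intro j _; ring

lemma key {N : ℕ} (w : Fin N → Fin N → ℝ) (hw : IsWeight w)
    (r s m n : Fin N) (he : (wGraph w).Adj m n)
    (ψ : Fin N → ℝ) (hψ : (lapMat w).mulVec ψ = dipole r s)
    (hlt : ψ n < ψ m) :
    ∃ p : (wGraph w).Walk r m, p.IsPath ∧ ∀ x ∈ p.support, ψ m ≤ ψ x := by
  classical
  obtain ⟨hsym, hnn, hdiag⟩ := hw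
  set G' := subG w ψ (ψ m) with hG'
  set A : Finset (Fin N) := Finset.univ.filter (fun i => G'.Reachable m i) with hA
  have hmA : m ∈ A := by
    rw [hA, Finset.mem_filter]
    exact ⟨Finset.mem_univ m, SimpleGraph.Reachable.refl m⟩
  have hge : ∀ i ∈ A, ψ m ≤ ψ i := by
    intro i hi
    rw [hA, Finset.mem_filter] at hi
    obtain ⟨p⟩ := hi.2
    exact subG_support_ge p le_rfl i p.end_mem_support
  have hnA : n ∉ A := fun h => absurd (hge n h) (not_le.mpr hlt)
  -- if i ∈ A, j ∉ A, w i j ≠ 0 then ψ j < ψ m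
  have hcut : ∀ i ∈ A, ∀ j, j ∉ A → w i j ≠ 0 → ψ j < ψ m := by
    intro i hi j hj hwij
    by_contra hle
    push_neg at hle
    have hne : i ≠ j := fun h => hwij (h ▸ hdiag i)
    have hadj : G'.Adj i j := show (wGraph w).Adj i j ∧ ψ m ≤ ψ i ∧ ψ m ≤ ψ j from
      ⟨show i ≠ j ∧ (w i j ≠ 0 ∨ w j i ≠ 0) from ⟨hne, Or.inl hwij⟩, hge i hi, hle⟩
    rw [hA, Finset.mem_filter] at hi hj
    exact hj ⟨Finset.mem_univ j, hi.2.trans hadj.reachable⟩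
  -- main claim: r ∈ A
  have hrA : r ∈ A := by
    by_contra hr
    have hS : ∑ i ∈ A, (lapMat w).mulVec ψ i = ∑ i ∈ A, dipole r s i := by
      rw [hψ]
    rw [Finset.sum_congr rfl (fun i _ => lap_mulVec w hdiag ψ i)] at hS
    -- split inner sums
    have hsplit : ∀ i, ∑ j, w i j * (ψ i - ψ j)
        = ∑ j ∈ A, w i j * (ψ i - ψ j) + ∑ j ∈ Aᶜ, w i j * (ψ i - ψ j) :=
      fun i => (Finset.sum_add_sum_compl A _).symm
    rw [Finset.sum_congr rfl (fun i _ => hsplit i), Finset.sum_add_distrib] at hS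
    have hzero : ∑ i ∈ A, ∑ j ∈ A, w i j * (ψ i - ψ j) = 0 := by
      have h1 : ∑ i ∈ A, ∑ j ∈ A, w i j * (ψ i - ψ j)
          = ∑ j ∈ A, ∑ i ∈ A, w i j * (ψ i - ψ j) := Finset.sum_comm
      have h2 : ∑ j ∈ A, ∑ i ∈ A, w i j * (ψ i - ψ j)
          = - ∑ i ∈ A, ∑ j ∈ A, w i j * (ψ i - ψ j) := by
        rw [← Finset.sum_neg_distrib]
        apply Finset.sum_congr rfl; intro j _
        rw [← Finset.sum_neg_distrib]
        apply Finset.sum_congr rfl; intro i _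
        rw [hsym j i]; ring
      linarith [h1, h2]
    rw [hzero, zero_add] at hS
    -- positivity
    have hpos : 0 < ∑ i ∈ A, ∑ j ∈ Aᶜ, w i j * (ψ i - ψ j) := by
      have hnonneg : ∀ i ∈ A, ∀ j ∈ Aᶜ, 0 ≤ w i j * (ψ i - ψ j) := by
        intro i hi j hj
        rw [Finset.mem_compl] at hj
        by_cases hwij : w i j = 0
        · simp [hwij]
        · have h1 := hcut i hi j hj hwij
          have h2 := hge i hi
          have : 0 < w i j := lt_of_le_of_ne (hnn i j) (Ne.symm hwij)
          nlinarith
      apply Finset.sum_pos' (fun i hi => Finset.sum_nonneg (fun j hj => hnonneg i hi j hj))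
      refine ⟨m, hmA, ?_⟩
      apply Finset.sum_pos' (fun j hj => hnonneg m hmA j hj)
      refine ⟨n, Finset.mem_compl.mpr hnA, ?_⟩
      have hwmn : w m n ≠ 0 := by
        rcases he.2 with h | h
        · exact h
        · rw [hsym m n]; exact h
      have : 0 < w m n := lt_of_le_of_ne (hnn m n) (Ne.symm hwmn)
      nlinarith
    -- dipole sum ≤ 0
    have hdip : ∑ i ∈ A, dipole r s i ≤ 0 := by
      simp only [dipole, Finset.sum_sub_distrib, Finset.sum_ite_eq' A, hr]
      by_cases hs : s ∈ A <;> simp [hs]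
    linarith
  -- extract the path
  rw [hA, Finset.mem_filter] at hrA
  obtain ⟨p0⟩ := hrA.2.symm
  have hψr : ψ m ≤ ψ r := hge r (by rw [hA, Finset.mem_filter]; exact ⟨Finset.mem_univ r, hrA.2⟩)
  have hsupp0 := subG_support_ge p0 hψr
  have hsub : ∀ e ∈ p0.edges, e ∈ (wGraph w).edgeSet := by
    intro e heE
    have := p0.edges_subset_edgeSet heE
    revert this
    refine Sym2.ind (fun x y h => ?_) e
    exact h.1
  let p1 := p0.transfer (wGraph w) hsub
  have hsupp1 : ∀ x ∈ p1.support, ψ m ≤ ψ x := by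
    intro x hx
    rw [SimpleGraph.Walk.support_transfer] at hx
    exact hsupp0 x hx
  refine ⟨p1.toPath.1, p1.toPath.2, fun x hx => hsupp1 x (p1.support_toPath_subset hx)⟩

lemma dipole_neg {N : ℕ} (r s : Fin N) : dipole s r = -(dipole r s) := by
  funext i; simp only [dipole, Pi.neg_apply]; ring

theorem lodf_vanishes_without_two_independent_paths {N : ℕ}
    (w : Fin N → Fin N → ℝ)
    (hw : IsWeight w) (hconn : (wGraph w).Connected)
    (r s m n : Fin N)
    (hℓ : (wGraph w).Adj r s) (he : (wGraph w).Adj m n)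
    (hindep : ¬ ∃ (a c : Fin N) (_ : a ∈ ({r, s} : Set (Fin N)))
        (_ : c ∈ ({r, s} : Set (Fin N)))
        (b d : Fin N) (_ : b ∈ ({m, n} : Set (Fin N)))
        (_ : d ∈ ({m, n} : Set (Fin N)))
        (p₁ : (wGraph w).Walk a b) (p₂ : (wGraph w).Walk c d),
        p₁.IsPath ∧ p₂.IsPath ∧ List.Disjoint p₁.edges p₂.edges)
    (ψ : Fin N → ℝ) (hψ : (lapMat w).mulVec ψ = dipole r s) :
    ψ m = ψ n := by
  by_contra hne
  have hψ' : (lapMat w).mulVec (-ψ) = dipole s r := by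
    rw [Matrix.mulVec_neg, hψ, ← dipole_neg]
  rcases lt_or_gt_of_ne hne with hlt | hlt
  · -- ψ m < ψ n
    obtain ⟨p₁, hp₁, hs₁⟩ := key w hw r s n m he.symm ψ hψ hlt
    obtain ⟨p₂, hp₂, hs₂⟩ := key w hw s r m n he (-ψ) hψ' (by simpa using hlt)
    apply hindep
    refine ⟨r, s, Set.mem_insert r _, Set.mem_insert_iff.mpr (Or.inr rfl),
      n, m, Set.mem_insert_iff.mpr (Or.inr rfl), Set.mem_insert m _,
      p₁, p₂, hp₁, hp₂, ?_⟩
    intro e he1 he2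
    revert he1 he2
    refine Sym2.ind (fun x y h1 h2 => ?_) e
    have hx1 := hs₁ x (p₁.fst_mem_support_of_mem_edges h1)
    have hx2 := hs₂ x (p₂.fst_mem_support_of_mem_edges h2)
    simp only [Pi.neg_apply, neg_le_neg_iff] at hx2
    linarith
  · -- ψ n < ψ m
    obtain ⟨p₁, hp₁, hs₁⟩ := key w hw r s m n he ψ hψ hlt
    obtain ⟨p₂, hp₂, hs₂⟩ := key w hw s r n m he.symm (-ψ) hψ' (by simpa using hlt)
    apply hindep
    refine ⟨r, s, Set.mem_insert r _, Set.mem_insert_iff.mpr (Or.inr rfl),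
      m, n, Set.mem_insert m _, Set.mem_insert_iff.mpr (Or.inr rfl),
      p₁, p₂, hp₁, hp₂, ?_⟩
    intro e he1 he2
    revert he1 he2
    refine Sym2.ind (fun x y h1 h2 => ?_) e
    have hx1 := hs₁ x (p₁.fst_mem_support_of_mem_edges h1)
    have hx2 := hs₂ x (p₂.fst_mem_support_of_mem_edges h2)
    simp only [Pi.neg_apply, neg_le_neg_iff] at hx2
    linarith
end
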